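/- Product of blossoms (polynomial case): let h and h₁ be polynomials of degrees ≤ p and ≤ p₁ with blossoms H and H₁, and set p̂ = p + p₁. Then the blossom Ĥ of the product h·h₁ is given by Ĥ(s₁,…,s_{p̂}) = (1/C(p̂,p)) Σ H(s_{i₁},…,s_{i_p})·H₁(s_{i_{p+1}},…,s_{i_{p̂}}), where the sum runs over all partitions of {1,…,p̂} into disjoint subsets of sizes p and p₁. -/
import Mathlib


open Polynomial

/-- `H` is symmetric: invariant under permutations of its arguments. -/
def IsSymmFn {p : ℕ} (H : (Fin p → ℝ) → ℝ) : Prop :=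
  ∀ (σ : Equiv.Perm (Fin p)) (x : Fin p → ℝ), H (x ∘ σ) = H x

/-- `H` is multi-affine: affine in each argument separately. -/
def IsMultiAffine {p : ℕ} (H : (Fin p → ℝ) → ℝ) : Prop :=
  ∀ (i : Fin p) (x : Fin p → ℝ), ∃ a b : ℝ, ∀ t : ℝ,
    H (Function.update x i t) = a * t + b

/-- Given a subset `A` of `{1,…,n}` of cardinality `m`, restrict an `n`-tuple `s` to the
`m`-tuple of the entries of `s` indexed by `A` (in increasing order). -/
noncomputable def restrictTuple {n m : ℕ} (A : Finset (Fin n)) (hA : A.card = m)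
    (s : Fin n → ℝ) : Fin m → ℝ :=
  fun i => s (A.orderIsoOfFin hA i)

namespace Stmt17Aux


lemma affine_interp {n : ℕ} {D : (Fin n → ℝ) → ℝ} (hma : IsMultiAffine D)
    (y : Fin n → ℝ) (j : Fin n) :
    D y = (1 - y j) * D (Function.update y j 0) + y j * D (Function.update y j 1) := by
  obtain ⟨a, b, hab⟩ := hma j y
  have hy : D y = a * y j + b := by
    conv_lhs => rw [← Function.update_eq_self j y]
    exact hab (y j)
  rw [hy, hab 0, hab 1]; ring

lemma expand_aux {n : ℕ} {D : (Fin n → ℝ) → ℝ} (hma : IsMultiAffine D)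
    (T : Finset (Fin n)) :
    ∀ x : Fin n → ℝ, D x = ∑ S ∈ T.powerset,
      (∏ i ∈ S, x i) * (∏ i ∈ T \ S, (1 - x i)) *
        D (fun i => if i ∈ S then 1 else if i ∈ T then 0 else x i) := by
  classical
  induction T using Finset.induction_on with
  | empty => intro x; simp
  | @insert j T' hj IH =>
    intro x
    rw [Finset.sum_powerset_insert hj, IH x, ← Finset.sum_add_distrib]
    apply Finset.sum_congr rfl
    intro S hS
    have hjS : j ∉ S := fun h => hj (Finset.mem_powerset.mp hS h)
    have h0 : (fun i => if i ∈ S then (1:ℝ) else if i ∈ insert j T' then 0 else x i)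
        = Function.update (fun i => if i ∈ S then 1 else if i ∈ T' then 0 else x i) j 0 := by
      funext i
      rcases eq_or_ne i j with rfl | hij
      · simp [hjS]
      · simp [Function.update_of_ne hij, hij]
    have h1 : (fun i => if i ∈ insert j S then (1:ℝ) else if i ∈ insert j T' then 0 else x i)
        = Function.update (fun i => if i ∈ S then 1 else if i ∈ T' then 0 else x i) j 1 := by
      funext i
      rcases eq_or_ne i j with rfl | hij
      · simp
      · simp [Function.update_of_ne hij, hij]
    have hsd1 : insert j T' \ S = insert j (T' \ S) := by
      ext i; simp [Finset.mem_sdiff, Finset.mem_insert]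
      constructor
      · rintro ⟨h1 | h1, h2⟩
        · exact Or.inl h1
        · exact Or.inr ⟨h1, h2⟩
      · rintro (rfl | ⟨h1, h2⟩)
        · exact ⟨Or.inl rfl, hjS⟩
        · exact ⟨Or.inr h1, h2⟩
    have hsd2 : insert j T' \ insert j S = T' \ S := by
      ext i; simp only [Finset.mem_sdiff, Finset.mem_insert]
      constructor
      · rintro ⟨rfl | ha, hb⟩
        · exact absurd (Or.inl rfl) hb
        · exact ⟨ha, fun h => hb (Or.inr h)⟩
      · rintro ⟨ha, hb⟩
        refine ⟨Or.inr ha, ?_⟩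
        rintro (rfl | h)
        · exact hj ha
        · exact hb h
    have hjTS : j ∉ T' \ S := fun h => hj (Finset.mem_sdiff.mp h).1
    rw [hsd1, hsd2, Finset.prod_insert hjTS, Finset.prod_insert hjS, h0, h1,
      affine_interp hma (fun i => if i ∈ S then (1:ℝ) else if i ∈ T' then 0 else x i) j]
    have hjval : (if j ∈ S then (1:ℝ) else if j ∈ T' then 0 else x j) = x j := by
      simp [hjS, hj]
    rw [hjval]
    ring

lemma expand_univ {n : ℕ} {D : (Fin n → ℝ) → ℝ} (hma : IsMultiAffine D) (x : Fin n → ℝ) :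
    D x = ∑ S ∈ (Finset.univ : Finset (Fin n)).powerset,
      (∏ i ∈ S, x i) * (∏ i ∈ Finset.univ \ S, (1 - x i)) *
        D (fun i => if i ∈ S then 1 else 0) := by
  rw [expand_aux hma Finset.univ x]
  apply Finset.sum_congr rfl
  intro S _
  have harg : (fun i => if i ∈ S then (1:ℝ) else if i ∈ Finset.univ then 0 else x i)
      = fun i => if i ∈ S then 1 else 0 := by
    funext i
    by_cases hi : i ∈ S <;> simp [hi]
  rw [harg]



lemma indicator_eq {n : ℕ} {D : (Fin n → ℝ) → ℝ} (hs : IsSymmFn D) {S S' : Finset (Fin n)}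
    (h : S.card = S'.card) :
    D (fun i => if i ∈ S then 1 else 0) = D (fun i => if i ∈ S' then 1 else 0) := by
  classical
  have e : {i : Fin n // i ∈ S} ≃ {i : Fin n // i ∈ S'} :=
    Fintype.equivOfCardEq (by simp [Fintype.card_coe, h])
  have f : {i : Fin n // ¬ i ∈ S} ≃ {i : Fin n // ¬ i ∈ S'} :=
    Fintype.equivOfCardEq (by simp [Fintype.card_subtype_compl, Fintype.card_coe, h])
  set σ : Equiv.Perm (Fin n) := Equiv.subtypeCongr e f with hσ
  have hmem : ∀ i, σ i ∈ S' ↔ i ∈ S := by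
    intro i
    by_cases hi : i ∈ S
    · have : σ i = (e ⟨i, hi⟩ : {i : Fin n // i ∈ S'}) := by
        simp [hσ, Equiv.subtypeCongr, hi]
      rw [this]
      exact iff_of_true (e ⟨i, hi⟩).2 hi
    · have : σ i = (f ⟨i, hi⟩ : {i : Fin n // ¬ i ∈ S'}) := by
        simp [hσ, Equiv.subtypeCongr, hi]
      rw [this]
      exact iff_of_false (f ⟨i, hi⟩).2 hi
  have harg : ((fun i => if i ∈ S' then (1:ℝ) else 0) ∘ σ) = fun i => if i ∈ S then 1 else 0 := by
    funext i
    by_cases hi : i ∈ S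
    · simp only [Function.comp_apply, if_pos ((hmem i).mpr hi), if_pos hi]
    · simp only [Function.comp_apply, if_neg (fun hh => hi ((hmem i).mp hh)), if_neg hi]
  rw [← harg, hs σ]

lemma bern_coeffs_zero {n : ℕ} (c : ℕ → ℝ)
    (h : ∀ t : ℝ, ∑ k ∈ Finset.range (n+1), c k * (t ^ k * (1-t)^(n-k)) = 0) :
    ∀ m, m ≤ n → c m = 0 := by
  have hP : (∑ k ∈ Finset.range (n+1),
      Polynomial.C (c k) * ((1 - Polynomial.X)^(n-k) * Polynomial.X ^ k) : Polynomial ℝ) = 0 := by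
    apply Polynomial.funext
    intro t
    simp only [Polynomial.eval_finset_sum, Polynomial.eval_mul, Polynomial.eval_pow,
      Polynomial.eval_sub, Polynomial.eval_one, Polynomial.eval_C, Polynomial.eval_X,
      Polynomial.eval_zero]
    calc ∑ k ∈ Finset.range (n+1), c k * ((1-t)^(n-k) * t ^ k)
        = ∑ k ∈ Finset.range (n+1), c k * (t ^ k * (1-t)^(n-k)) := by
          apply Finset.sum_congr rfl; intro k _; ring
      _ = 0 := h t
  intro m
  induction m using Nat.strong_induction_on with
  | _ m IH =>
    intro hm
    have hc : (∑ k ∈ Finset.range (n+1),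
        Polynomial.C (c k) * ((1 - Polynomial.X)^(n-k) * Polynomial.X ^ k) : Polynomial ℝ).coeff m
        = 0 := by rw [hP]; simp
    rw [Polynomial.finset_sum_coeff] at hc
    have hterm : ∀ k ∈ Finset.range (n+1),
        (Polynomial.C (c k) * ((1 - Polynomial.X)^(n-k) * Polynomial.X ^ k) : Polynomial ℝ).coeff m
        = if k = m then c m else 0 := by
      intro k hk
      rw [Polynomial.coeff_C_mul, Polynomial.coeff_mul_X_pow']
      rcases lt_trichotomy k m with hkm | rfl | hkm
      · rw [if_pos hkm.le, if_neg hkm.ne, IH k hkm (le_trans hkm.le hm), zero_mul]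
      · rw [if_pos le_rfl, if_pos rfl, Nat.sub_self, Polynomial.coeff_zero_eq_eval_zero]
        simp
      · rw [if_neg (not_le.mpr hkm), if_neg (ne_of_gt hkm), mul_zero]
    rw [Finset.sum_congr rfl hterm, Finset.sum_ite_eq' (Finset.range (n+1)) m (fun _ => c m)] at hc
    rw [if_pos (Finset.mem_range.mpr (Nat.lt_succ_of_le hm))] at hc
    exact hc

lemma blossom_zero {n : ℕ} {D : (Fin n → ℝ) → ℝ} (hs : IsSymmFn D) (hma : IsMultiAffine D)
    (h0 : ∀ t : ℝ, D (fun _ => t) = 0) : ∀ x, D x = 0 := by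
  classical
  set d : ℕ → ℝ := fun k =>
    if hk : k ≤ n then
      D (fun i => if i ∈ (Finset.univ : Finset (Fin k)).map (Fin.castLEEmb hk) then 1 else 0)
    else 0 with hd
  have hcardle : ∀ S : Finset (Fin n), S.card ≤ n := by
    intro S
    simpa using Finset.card_le_univ S
  have hdval : ∀ S : Finset (Fin n), D (fun i => if i ∈ S then 1 else 0) = d S.card := by
    intro S
    rw [hd]
    simp only
    rw [dif_pos (hcardle S)]
    exact indicator_eq hs (by simp)
  have hbern : ∀ t : ℝ, ∑ k ∈ Finset.range (n+1),
      ((n.choose k : ℝ) * d k) * (t ^ k * (1-t)^(n-k)) = 0 := by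
    intro t
    have hexp : ∑ S ∈ (Finset.univ : Finset (Fin n)).powerset,
        (∏ _i ∈ S, t) * (∏ _i ∈ Finset.univ \ S, (1 - t)) *
          D (fun i => if i ∈ S then 1 else 0) = 0 := by
      rw [← expand_univ hma (fun _ => t)]
      exact h0 t
    rw [Finset.sum_powerset] at hexp
    calc ∑ k ∈ Finset.range (n+1), ((n.choose k:ℝ) * d k) * (t^k * (1-t)^(n-k))
        = ∑ k ∈ Finset.range ((Finset.univ : Finset (Fin n)).card + 1),
            ∑ S ∈ Finset.univ.powersetCard k,
              (∏ _i ∈ S, t) * (∏ _i ∈ Finset.univ \ S, (1-t)) *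
                D (fun i => if i ∈ S then 1 else 0) := by
          rw [Finset.card_univ, Fintype.card_fin]
          apply Finset.sum_congr rfl
          intro k _
          have hterm : ∀ S ∈ (Finset.univ : Finset (Fin n)).powersetCard k,
              (∏ _i ∈ S, t) * (∏ _i ∈ Finset.univ \ S, (1-t)) *
                D (fun i => if i ∈ S then 1 else 0) = d k * (t^k * (1-t)^(n-k)) := by
            intro S hS
            have hSk : S.card = k := (Finset.mem_powersetCard.mp hS).2
            have hsd : (Finset.univ \ S).card = n - k := by
              rw [Finset.card_sdiff_of_subset (Finset.subset_univ S), Finset.card_univ, Fintype.card_fin, hSk]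
            rw [Finset.prod_const, Finset.prod_const, hSk, hsd, hdval S, hSk]
            ring
          rw [Finset.sum_congr rfl hterm, Finset.sum_const, Finset.card_powersetCard,
            Finset.card_univ, Fintype.card_fin, nsmul_eq_mul]
          ring
      _ = 0 := hexp
  have hdzero : ∀ k, k ≤ n → d k = 0 := by
    intro k hk
    have hz := bern_coeffs_zero _ hbern k hk
    have hpos : (0:ℝ) < (n.choose k : ℝ) := by exact_mod_cast Nat.choose_pos hk
    rcases mul_eq_zero.mp hz with hc | hdk
    · exact absurd hc (ne_of_gt hpos)
    · exact hdk
  intro x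
  rw [expand_univ hma x]
  apply Finset.sum_eq_zero
  intro S _
  rw [hdval S, hdzero S.card (hcardle S), mul_zero]




/-- proof-free version of restrictTuple -/
noncomputable def rT {n : ℕ} (m : ℕ) (A : Finset (Fin n)) (s : Fin n → ℝ) : Fin m → ℝ :=
  if hA : A.card = m then restrictTuple A hA s else fun _ => 0

noncomputable def Phi (p p₁ : ℕ) (H : (Fin p → ℝ) → ℝ) (H₁ : (Fin p₁ → ℝ) → ℝ)
    (A : Finset (Fin (p + p₁))) (s : Fin (p + p₁) → ℝ) : ℝ :=
  if A.card = p then H (rT p A s) * H₁ (rT p₁ Aᶜ s) else 0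

lemma restrict_eq_of_range {n m : ℕ} {H : (Fin m → ℝ) → ℝ} (hs : IsSymmFn H)
    (A : Finset (Fin n)) (hA : A.card = m) (u : Fin m → Fin n) (hu : Function.Injective u)
    (hmemu : ∀ i, u i ∈ A) (s : Fin n → ℝ) :
    H (fun i => s (u i)) = H (restrictTuple A hA s) := by
  classical
  have hbij : Function.Bijective (fun i => (⟨u i, hmemu i⟩ : {x // x ∈ A})) := by
    rw [Fintype.bijective_iff_injective_and_card]
    constructor
    · intro a b hab
      exact hu (congrArg Subtype.val hab)
    · simp [Fintype.card_coe, hA]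
  set e2 : Fin m ≃ {x // x ∈ A} := Equiv.ofBijective _ hbij with he2
  set e1 : Fin m ≃ {x // x ∈ A} := (A.orderIsoOfFin hA).toEquiv with he1
  set σ : Equiv.Perm (Fin m) := e2.trans e1.symm with hσ
  have hcomp : (fun i => s (u i)) = (restrictTuple A hA s) ∘ σ := by
    funext i
    show s (u i) = restrictTuple A hA s (σ i)
    have h1 : (A.orderIsoOfFin hA) (σ i) = ⟨u i, hmemu i⟩ := by
      show e1 (σ i) = _
      rw [hσ]
      simp [he2]
    simp only [restrictTuple, h1]
  rw [hcomp, hs σ]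

lemma compl_image {n : ℕ} (σ : Equiv.Perm (Fin n)) (A : Finset (Fin n)) :
    (A.image σ)ᶜ = Aᶜ.image σ := by
  classical
  ext i
  simp only [Finset.mem_compl, Finset.mem_image]
  constructor
  · intro hnot
    refine ⟨σ.symm i, ?_, by simp⟩
    intro hmem
    exact hnot ⟨σ.symm i, hmem, by simp⟩
  · rintro ⟨a, ha, rfl⟩ ⟨b, hb, hba⟩
    exact ha (σ.injective hba ▸ hb)

lemma Phi_symm {p p₁ : ℕ} {H : (Fin p → ℝ) → ℝ} {H₁ : (Fin p₁ → ℝ) → ℝ}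
    (hsH : IsSymmFn H) (hsH₁ : IsSymmFn H₁) (σ : Equiv.Perm (Fin (p + p₁)))
    (A : Finset (Fin (p + p₁))) (s : Fin (p + p₁) → ℝ) :
    Phi p p₁ H H₁ (A.image σ) s = Phi p p₁ H H₁ A (s ∘ σ) := by
  classical
  by_cases hA : A.card = p
  · have hIm : (A.image σ).card = p := by
      rw [Finset.card_image_of_injective _ σ.injective, hA]
    have hAc : Aᶜ.card = p₁ := by
      simp [Finset.card_compl, Fintype.card_fin, hA]
    have hImc : (Aᶜ.image σ).card = p₁ := by
      rw [Finset.card_image_of_injective _ σ.injective, hAc]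
    rw [Phi, Phi, if_pos hA, if_pos hIm, compl_image]
    congr 1
    · -- H factor
      rw [rT, rT, dif_pos hIm, dif_pos hA]
      rw [← restrict_eq_of_range hsH (A.image σ) hIm
          (fun i => σ (A.orderIsoOfFin hA i))
          (fun a b hab => (A.orderIsoOfFin hA).injective
            (Subtype.ext (σ.injective hab)))
          (fun i => Finset.mem_image_of_mem σ (A.orderIsoOfFin hA i).2) s]
      rfl
    · -- H₁ factor
      rw [rT, rT, dif_pos hImc, dif_pos hAc]
      rw [← restrict_eq_of_range hsH₁ (Aᶜ.image σ) hImc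
          (fun i => σ (Aᶜ.orderIsoOfFin hAc i))
          (fun a b hab => (Aᶜ.orderIsoOfFin hAc).injective
            (Subtype.ext (σ.injective hab)))
          (fun i => Finset.mem_image_of_mem σ (Aᶜ.orderIsoOfFin hAc i).2) s]
      rfl
  · have hIm : ¬ (A.image σ).card = p := by
      rw [Finset.card_image_of_injective _ σ.injective]; exact hA
    rw [Phi, Phi, if_neg hA, if_neg hIm]

lemma restrict_update_notMem {n m : ℕ} (A : Finset (Fin n)) (hA : A.card = m)
    (x : Fin n → ℝ) {i : Fin n} (hi : i ∉ A) (t : ℝ) :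
    restrictTuple A hA (Function.update x i t) = restrictTuple A hA x := by
  funext j
  have : (↑(A.orderIsoOfFin hA j) : Fin n) ≠ i := by
    intro hh
    exact hi (hh ▸ (A.orderIsoOfFin hA j).2)
  simp only [restrictTuple, Function.update_of_ne this]

lemma restrict_update_mem {n m : ℕ} (A : Finset (Fin n)) (hA : A.card = m)
    (x : Fin n → ℝ) {i : Fin n} (hi : i ∈ A) (t : ℝ) :
    restrictTuple A hA (Function.update x i t)
      = Function.update (restrictTuple A hA x) ((A.orderIsoOfFin hA).symm ⟨i, hi⟩) t := by
  funext j
  rcases eq_or_ne j ((A.orderIsoOfFin hA).symm ⟨i, hi⟩) with rfl | hj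
  · show Function.update x i t ↑(A.orderIsoOfFin hA ((A.orderIsoOfFin hA).symm ⟨i, hi⟩))
        = Function.update (restrictTuple A hA x) _ t _
    rw [OrderIso.apply_symm_apply]
    simp
  · have hne : (↑(A.orderIsoOfFin hA j) : Fin n) ≠ i := by
      intro hh
      apply hj
      have : A.orderIsoOfFin hA j = ⟨i, hi⟩ := Subtype.ext hh
      rw [← this, OrderIso.symm_apply_apply]
    simp only [restrictTuple, Function.update_of_ne hne, Function.update_of_ne hj]

lemma Phi_affine {p p₁ : ℕ} {H : (Fin p → ℝ) → ℝ} {H₁ : (Fin p₁ → ℝ) → ℝ}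
    (hmaH : IsMultiAffine H) (hmaH₁ : IsMultiAffine H₁)
    (A : Finset (Fin (p + p₁))) (i : Fin (p + p₁)) (x : Fin (p + p₁) → ℝ) :
    ∃ a b : ℝ, ∀ t : ℝ, Phi p p₁ H H₁ A (Function.update x i t) = a * t + b := by
  classical
  by_cases hA : A.card = p
  · have hAc : Aᶜ.card = p₁ := by
      simp [Finset.card_compl, Fintype.card_fin, hA]
    by_cases hi : i ∈ A
    · obtain ⟨a, b, hab⟩ := hmaH ((A.orderIsoOfFin hA).symm ⟨i, hi⟩) (restrictTuple A hA x)
      refine ⟨a * H₁ (restrictTuple Aᶜ hAc x), b * H₁ (restrictTuple Aᶜ hAc x), fun t => ?_⟩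
      rw [Phi, if_pos hA, rT, rT, dif_pos hA, dif_pos hAc,
        restrict_update_mem A hA x hi t, hab t,
        restrict_update_notMem Aᶜ hAc x (by simp [hi]) t]
      ring
    · have hic : i ∈ Aᶜ := Finset.mem_compl.mpr hi
      obtain ⟨a, b, hab⟩ := hmaH₁ ((Aᶜ.orderIsoOfFin hAc).symm ⟨i, hic⟩) (restrictTuple Aᶜ hAc x)
      refine ⟨H (restrictTuple A hA x) * a, H (restrictTuple A hA x) * b, fun t => ?_⟩
      rw [Phi, if_pos hA, rT, rT, dif_pos hA, dif_pos hAc,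
        restrict_update_mem Aᶜ hAc x hic t, hab t,
        restrict_update_notMem A hA x hi t]
      ring
  · exact ⟨0, 0, fun t => by rw [Phi, if_neg hA]; ring⟩

lemma Phi_diag {p p₁ : ℕ} {H : (Fin p → ℝ) → ℝ} {H₁ : (Fin p₁ → ℝ) → ℝ}
    {h h₁ : Polynomial ℝ}
    (hdiagH : ∀ t : ℝ, H (fun _ => t) = h.eval t)
    (hdiagH₁ : ∀ t : ℝ, H₁ (fun _ => t) = h₁.eval t)
    (A : Finset (Fin (p + p₁))) (hA : A.card = p) (t : ℝ) :
    Phi p p₁ H H₁ A (fun _ => t) = h.eval t * h₁.eval t := by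
  classical
  have hAc : Aᶜ.card = p₁ := by
    simp [Finset.card_compl, Fintype.card_fin, hA]
  rw [Phi, if_pos hA, rT, rT, dif_pos hA, dif_pos hAc]
  have h1 : restrictTuple A hA (fun _ => t) = fun _ => t := rfl
  have h2 : restrictTuple Aᶜ hAc (fun _ => t) = fun _ => t := rfl
  rw [h1, h2, hdiagH t, hdiagH₁ t]

end Stmt17Aux

/-- Product of blossoms: if `H, H₁, Ĥ` are the blossoms of `h`, `h₁` and of the product
`h·h₁` (of degrees ≤ `p`, `p₁` and `p̂ = p + p₁`), then
`Ĥ(s₁,…,s_{p̂}) = (1/C(p̂,p)) Σ H(s_{i₁},…,s_{i_p})·H₁(s_{i_{p+1}},…,s_{i_{p̂}})`,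
the sum running over all partitions of `{1,…,p̂}` into disjoint subsets of sizes `p`, `p₁`. -/
theorem stmt17 (p p₁ : ℕ) (h h₁ : Polynomial ℝ)
    (hdeg : h.natDegree ≤ p) (hdeg₁ : h₁.natDegree ≤ p₁)
    (H : (Fin p → ℝ) → ℝ) (H₁ : (Fin p₁ → ℝ) → ℝ) (Hhat : (Fin (p + p₁) → ℝ) → ℝ)
    (hsH : IsSymmFn H) (hmaH : IsMultiAffine H)
    (hdiagH : ∀ t : ℝ, H (fun _ => t) = h.eval t)
    (hsH₁ : IsSymmFn H₁) (hmaH₁ : IsMultiAffine H₁)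
    (hdiagH₁ : ∀ t : ℝ, H₁ (fun _ => t) = h₁.eval t)
    (hsHhat : IsSymmFn Hhat) (hmaHhat : IsMultiAffine Hhat)
    (hdiagHhat : ∀ t : ℝ, Hhat (fun _ => t) = (h * h₁).eval t) :
    ∀ s : Fin (p + p₁) → ℝ,
      Hhat s = (1 / ((p + p₁).choose p : ℝ)) *
        ∑ A ∈ ((Finset.univ : Finset (Fin (p + p₁))).powersetCard p).attach,
          H (restrictTuple A.1 (Finset.mem_powersetCard.mp A.2).2 s) *
          H₁ (restrictTuple A.1ᶜ
              (by simp [Finset.card_compl, (Finset.mem_powersetCard.mp A.2).2]) s) := by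
  classical
  have hC : ((p + p₁).choose p : ℝ) ≠ 0 := by
    exact_mod_cast (Nat.choose_pos (Nat.le_add_right p p₁)).ne'
  set P := (Finset.univ : Finset (Fin (p + p₁))).powersetCard p with hP
  set G : (Fin (p + p₁) → ℝ) → ℝ := fun y =>
    (1 / ((p + p₁).choose p : ℝ)) * ∑ A ∈ P, Stmt17Aux.Phi p p₁ H H₁ A y with hGdef
  have hPcard : P.card = (p + p₁).choose p := by
    rw [hP, Finset.card_powersetCard, Finset.card_univ, Fintype.card_fin]
  have hmemP : ∀ {A : Finset (Fin (p + p₁))}, A ∈ P ↔ A.card = p := by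
    intro A
    rw [hP, Finset.mem_powersetCard]
    exact ⟨fun hh => hh.2, fun hh => ⟨Finset.subset_univ A, hh⟩⟩
  have hGsymm : IsSymmFn G := by
    intro σ y
    simp only [hGdef]
    congr 1
    rw [show (∑ A ∈ P, Stmt17Aux.Phi p p₁ H H₁ A (y ∘ σ))
        = ∑ A ∈ P, Stmt17Aux.Phi p p₁ H H₁ (A.image σ) y from
      Finset.sum_congr rfl (fun A _ => (Stmt17Aux.Phi_symm hsH hsH₁ σ A y).symm)]
    apply Finset.sum_nbij' (fun A => A.image σ) (fun B => B.image σ.symm)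
    · intro A hA
      rw [hmemP, Finset.card_image_of_injective _ σ.injective]
      exact hmemP.mp hA
    · intro B hB
      rw [hmemP, Finset.card_image_of_injective _ σ.symm.injective]
      exact hmemP.mp hB
    · intro A _
      rw [Finset.image_image]
      simp
    · intro B _
      rw [Finset.image_image]
      simp
    · intro A _
      rfl
  have hGaffine : IsMultiAffine G := by
    intro i x
    choose a b hab using fun A => Stmt17Aux.Phi_affine hmaH hmaH₁ A i x
    refine ⟨(1 / ((p + p₁).choose p : ℝ)) * ∑ A ∈ P, a A,
           (1 / ((p + p₁).choose p : ℝ)) * ∑ A ∈ P, b A, fun t => ?_⟩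
    simp only [hGdef]
    rw [Finset.sum_congr rfl (fun A _ => hab A t), Finset.sum_add_distrib, ← Finset.sum_mul]
    ring
  have hGdiag : ∀ t : ℝ, G (fun _ => t) = (h * h₁).eval t := by
    intro t
    simp only [hGdef]
    rw [Finset.sum_congr rfl
        (fun A hA => Stmt17Aux.Phi_diag hdiagH hdiagH₁ A (hmemP.mp hA) t),
      Finset.sum_const, hPcard, nsmul_eq_mul, Polynomial.eval_mul, one_div,
      inv_mul_cancel_left₀ hC]
  have hz : ∀ y, Hhat y - G y = 0 := by
    apply Stmt17Aux.blossom_zero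
    · intro σ y
      show Hhat (y ∘ σ) - G (y ∘ σ) = Hhat y - G y
      rw [hsHhat σ y, hGsymm σ y]
    · intro i x
      obtain ⟨a1, b1, h1⟩ := hmaHhat i x
      obtain ⟨a2, b2, h2⟩ := hGaffine i x
      refine ⟨a1 - a2, b1 - b2, fun t => ?_⟩
      show Hhat (Function.update x i t) - G (Function.update x i t) = (a1 - a2) * t + (b1 - b2)
      rw [h1 t, h2 t]
      ring
    · intro t
      show Hhat (fun _ => t) - G (fun _ => t) = 0
      rw [hdiagHhat t, hGdiag t, sub_self]
  intro s
  have hHG : Hhat s = G s := by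
    have := hz s
    linarith
  rw [hHG]
  simp only [hGdef]
  congr 1
  rw [← Finset.sum_attach P (fun A => Stmt17Aux.Phi p p₁ H H₁ A s)]
  apply Finset.sum_congr rfl
  intro A _
  have hA : A.1.card = p := (Finset.mem_powersetCard.mp A.2).2
  have hAc : A.1ᶜ.card = p₁ := by
    simp [Finset.card_compl, Fintype.card_fin, hA]
  rw [Stmt17Aux.Phi, if_pos hA, Stmt17Aux.rT, Stmt17Aux.rT, dif_pos hA, dif_pos hAc]
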